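/- Let μ̃ be a real symmetric (k−1)×(k−1) matrix with eigenvalues λ₁ ≥ … ≥ λ_{k−1} and orthonormal eigenvectors U₁,…,U_{k−1}, and fix m < k−1 with λ_m > λ_{m+1}. Then the unique minimizer in Frobenius norm of ‖P − μ̃‖ over all rank-m orthogonal projection matrices P (i.e., symmetric idempotent matrices of trace m) is P = Σ_{j=1}^m U_j U_jᵀ. -/

import Mathlib

open Matrix Finset

lemma card_filter_lt_fin {n m : ℕ} (hmn : m ≤ n) :
    ((Finset.univ : Finset (Fin n)).filter fun j : Fin n => (j : ℕ) < m).card = m := by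
  rw [Finset.card_filter]
  rw [Fin.sum_univ_eq_sum_range (fun i => if i < m then 1 else 0)]
  rw [← Finset.card_filter]
  have h : ((Finset.range n).filter fun i => i < m) = Finset.range m := by
    ext i; simp only [mem_filter, mem_range]; omega
  rw [h, Finset.card_range]

lemma sum_ind {n m : ℕ} (hmn : m ≤ n) :
    ∑ j : Fin n, (if (j : ℕ) < m then (1:ℝ) else 0) = m := by
  rw [Finset.sum_boole, card_filter_lt_fin hmn]

lemma key_ineq {n m : ℕ} (hmn : m < n) (lam d : Fin n → ℝ)
    (hanti : ∀ i j : Fin n, i ≤ j → lam j ≤ lam i)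
    (hgap : ∀ i j : Fin n, (i : ℕ) < m → m ≤ (j : ℕ) → lam j < lam i)
    (hd0 : ∀ j, 0 ≤ d j) (hd1 : ∀ j, d j ≤ 1)
    (hsum : ∑ j, d j = (m : ℝ)) :
    (∑ j, lam j * d j ≤ ∑ j ∈ Finset.univ.filter fun j : Fin n => (j:ℕ) < m, lam j)
    ∧ ((∑ j, lam j * d j = ∑ j ∈ Finset.univ.filter fun j : Fin n => (j:ℕ) < m, lam j)
       → ∀ j : Fin n, d j = if (j:ℕ) < m then 1 else 0) := by
  set c : ℝ := lam ⟨m, hmn⟩ with hc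
  set g : Fin n → ℝ := fun j => if (j:ℕ) < m then (lam j - c)*(1 - d j) else (c - lam j) * d j with hg
  have hg0 : ∀ j, 0 ≤ g j := by
    intro j
    simp only [hg]
    split
    · next h =>
      have h1 : c < lam j := hgap j ⟨m, hmn⟩ h (le_refl m)
      nlinarith [hd1 j]
    · next h =>
      have h1 : lam j ≤ c := by
        apply hanti ⟨m, hmn⟩ j
        exact Fin.mk_le_of_le_val (by omega)
      nlinarith [hd0 j]
  have hterm : ∀ j : Fin n, g j = (if (j:ℕ) < m then lam j else 0) - lam j * d j
      + c * (d j - (if (j:ℕ) < m then (1:ℝ) else 0)) := by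
    intro j; simp only [hg]; split <;> ring
  have hiden : ∑ j, g j
      = (∑ j ∈ Finset.univ.filter fun j : Fin n => (j:ℕ) < m, lam j) - ∑ j, lam j * d j := by
    rw [Finset.sum_congr rfl (fun j _ => hterm j)]
    rw [Finset.sum_add_distrib, Finset.sum_sub_distrib, ← Finset.mul_sum,
      Finset.sum_sub_distrib, hsum, sum_ind (le_of_lt hmn), Finset.sum_filter]
    ring
  have hS0 : 0 ≤ ∑ j, g j := Finset.sum_nonneg fun j _ => hg0 j
  constructor
  · linarith [hiden]
  · intro heq j
    have hSz : ∑ j, g j = 0 := by rw [hiden, heq]; ring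
    have hz : ∀ j ∈ Finset.univ, g j = 0 :=
      (Finset.sum_eq_zero_iff_of_nonneg (fun j _ => hg0 j)).mp hSz
    have hone : ∀ j : Fin n, (j:ℕ) < m → d j = 1 := by
      intro j hj
      have h0 := hz j (Finset.mem_univ j)
      simp only [hg, if_pos hj] at h0
      have h1 : c < lam j := hgap j ⟨m, hmn⟩ hj (le_refl m)
      have h2 : (1 : ℝ) - d j = 0 := by
        rcases mul_eq_zero.mp h0 with h | h
        · exfalso; linarith
        · exact h
      linarith
    have hsplit := Finset.sum_filter_add_sum_filter_not Finset.univ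
      (fun j : Fin n => (j:ℕ) < m) d
    have hfsum : ∑ j ∈ Finset.univ.filter (fun j : Fin n => (j:ℕ) < m), d j = m := by
      rw [Finset.sum_congr rfl (fun j hj => hone j (Finset.mem_filter.mp hj).2)]
      simp [card_filter_lt_fin (le_of_lt hmn)]
    have hrest : ∑ j ∈ Finset.univ.filter (fun j : Fin n => ¬ (j:ℕ) < m), d j = 0 := by
      rw [hsum] at hsplit
      linarith [hsplit, hfsum]
    have hzero : ∀ j : Fin n, ¬ (j:ℕ) < m → d j = 0 := by
      intro j hj
      exact (Finset.sum_eq_zero_iff_of_nonneg (fun j _ => hd0 j)).mp hrest j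
        (Finset.mem_filter.mpr ⟨Finset.mem_univ j, hj⟩)
    by_cases hj : (j:ℕ) < m
    · rw [if_pos hj]; exact hone j hj
    · rw [if_neg hj]; exact hzero j hj


/-- Projection for the affine-shape embedding: for a real symmetric matrix `μ` with
eigenvalues `λ₁ ≥ … ≥ λ_n` and a gap `λ_m > λ_{m+1}`, the unique closest (Frobenius
norm) rank-`m` orthogonal projection matrix to `μ` is `P₀ = Σ_{j<m} U_j U_jᵀ`. -/
theorem affine_shape_projection
    {n m : ℕ} (hm : 0 < m) (hmn : m < n)
    (μ : Matrix (Fin n) (Fin n) ℝ) (hsym : μ.IsSymm)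
    (lam : Fin n → ℝ) (U : Fin n → Fin n → ℝ)
    (heig : ∀ j, μ.mulVec (U j) = lam j • U j)
    (horth : ∀ i j, dotProduct (U i) (U j) = if i = j then (1 : ℝ) else 0)
    (hanti : ∀ i j : Fin n, i ≤ j → lam j ≤ lam i)
    (hgap : ∀ i j : Fin n, (i : ℕ) < m → m ≤ (j : ℕ) → lam j < lam i)
    (P₀ : Matrix (Fin n) (Fin n) ℝ)
    (hP₀ : P₀ = ∑ j ∈ Finset.univ.filter fun j : Fin n => (j : ℕ) < m,
      vecMulVec (U j) (U j))
    (Pset : Set (Matrix (Fin n) (Fin n) ℝ))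
    (hPset : Pset = {P | P.IsSymm ∧ P * P = P ∧ P.trace = (m : ℝ)})
    (dF : Matrix (Fin n) (Fin n) ℝ → Matrix (Fin n) (Fin n) ℝ → ℝ)
    (hdF : ∀ B C, dF B C = ∑ i, ∑ j, (B i j - C i j) ^ 2) :
    P₀ ∈ Pset ∧ (∀ P ∈ Pset, dF P₀ μ ≤ dF P μ) ∧
      (∀ P ∈ Pset, dF P μ = dF P₀ μ → P = P₀) := by
  set Q : Matrix (Fin n) (Fin n) ℝ := Matrix.of U with hQdef
  have hQQt : Q * Qᵀ = 1 := by
    ext i j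
    simpa [hQdef, Matrix.mul_apply, Matrix.one_apply, dotProduct] using horth i j
  have hQtQ : Qᵀ * Q = 1 := mul_eq_one_comm.mp hQQt
  have hmu1 : μ * Qᵀ = Qᵀ * diagonal lam := by
    ext i j
    have h2 := congrFun (heig j) i
    simp only [Matrix.mulVec, dotProduct, Pi.smul_apply, smul_eq_mul] at h2
    simp only [Matrix.mul_apply, Matrix.transpose_apply, hQdef, Matrix.of_apply,
      Matrix.diagonal_apply, mul_ite, mul_zero]
    rw [Finset.sum_ite_eq' Finset.univ j fun x => U x i * lam x, if_pos (Finset.mem_univ j), h2]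
    ring
  have hmu : μ = Qᵀ * diagonal lam * Q := by
    calc μ = μ * (Qᵀ * Q) := by rw [hQtQ, Matrix.mul_one]
    _ = (μ * Qᵀ) * Q := by rw [Matrix.mul_assoc]
    _ = Qᵀ * diagonal lam * Q := by rw [hmu1]
  set dv : Fin n → ℝ := fun j => if (j : ℕ) < m then 1 else 0 with hdv
  set D : Matrix (Fin n) (Fin n) ℝ := diagonal dv with hD
  have hdvv : (fun j => dv j * dv j) = dv := by
    funext j; simp only [hdv]; split <;> norm_num
  have hDD : D * D = D := by
    rw [hD, Matrix.diagonal_mul_diagonal, hdvv]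
  have hDt : Dᵀ = D := Matrix.diagonal_transpose dv
  have hDQ : D * Q = Matrix.of fun j k => dv j * U j k := by
    ext j k
    rw [hD, Matrix.diagonal_mul]
    rfl
  have hP₀D : P₀ = Qᵀ * D * Q := by
    rw [hP₀, Matrix.mul_assoc, hDQ]
    ext i k
    rw [Matrix.sum_apply]
    simp only [Matrix.vecMulVec_apply, Matrix.mul_apply, Matrix.transpose_apply,
      Matrix.of_apply, hQdef, hdv, ite_mul, one_mul, zero_mul, mul_ite, mul_zero, mul_one]
    rw [Finset.sum_filter]
  -- membership of P₀
  have hP₀symm : P₀.IsSymm := by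
    show P₀ᵀ = P₀
    rw [hP₀D, Matrix.transpose_mul, Matrix.transpose_mul, Matrix.transpose_transpose, hDt,
      Matrix.mul_assoc]
  have hP₀idem : P₀ * P₀ = P₀ := by
    rw [hP₀D]
    calc Qᵀ * D * Q * (Qᵀ * D * Q) = Qᵀ * D * (Q * Qᵀ) * D * Q := by noncomm_ring
    _ = Qᵀ * D * D * Q := by rw [hQQt, Matrix.mul_one]
    _ = Qᵀ * (D * D) * Q := by rw [Matrix.mul_assoc Qᵀ D D]
    _ = Qᵀ * D * Q := by rw [hDD]
  have hP₀tr : P₀.trace = (m : ℝ) := by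
    rw [hP₀D, Matrix.trace_mul_comm (Qᵀ * D) Q, ← Matrix.mul_assoc, hQQt, Matrix.one_mul, hD,
      Matrix.trace_diagonal]
    exact sum_ind (le_of_lt hmn)
  have hP₀mem : P₀ ∈ Pset := by
    rw [hPset]; exact ⟨hP₀symm, hP₀idem, hP₀tr⟩
  have hP₀conj : Q * P₀ * Qᵀ = D := by
    rw [hP₀D]
    calc Q * (Qᵀ * D * Q) * Qᵀ = (Q * Qᵀ) * D * (Q * Qᵀ) := by noncomm_ring
    _ = D := by rw [hQQt, Matrix.one_mul, Matrix.mul_one]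
  -- main facts for an arbitrary P ∈ Pset
  have main : ∀ P : Matrix (Fin n) (Fin n) ℝ, P.IsSymm → P * P = P → P.trace = (m:ℝ) →
      (dF P μ = (m:ℝ) - 2 * (∑ j, lam j * (Q * P * Qᵀ) j j) + ∑ i, ∑ j, (μ i j)^2)
      ∧ (∀ j, 0 ≤ (Q * P * Qᵀ) j j) ∧ (∀ j, (Q * P * Qᵀ) j j ≤ 1)
      ∧ (∑ j, (Q * P * Qᵀ) j j = (m:ℝ))
      ∧ ((∀ j, (Q * P * Qᵀ) j j = dv j) → P = P₀) := by
    intro P hPs hPP hPt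
    set P' : Matrix (Fin n) (Fin n) ℝ := Q * P * Qᵀ with hP'
    have hP's : P'ᵀ = P' := by
      rw [hP', Matrix.transpose_mul, Matrix.transpose_mul, Matrix.transpose_transpose, hPs,
        Matrix.mul_assoc]
    have hP'i : P' * P' = P' := by
      rw [hP']
      calc Q * P * Qᵀ * (Q * P * Qᵀ) = Q * P * (Qᵀ * Q) * P * Qᵀ := by noncomm_ring
      _ = Q * P * P * Qᵀ := by rw [hQtQ, Matrix.mul_one]
      _ = Q * (P * P) * Qᵀ := by rw [Matrix.mul_assoc Q P P]
      _ = Q * P * Qᵀ := by rw [hPP]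
    have hP'tr : P'.trace = (m : ℝ) := by
      rw [hP', Matrix.trace_mul_comm (Q * P) Qᵀ, ← Matrix.mul_assoc, hQtQ, Matrix.one_mul, hPt]
    have hP'sym : ∀ a b, P' a b = P' b a := by
      intro a b
      conv_rhs => rw [← hP's]
      rw [Matrix.transpose_apply]
    have hdiagsq : ∀ j, P' j j = ∑ k, (P' j k)^2 := by
      intro j
      conv_lhs => rw [← hP'i]
      rw [Matrix.mul_apply]
      exact Finset.sum_congr rfl fun k _ => by rw [hP'sym k j, sq]
    have hd0 : ∀ j, 0 ≤ P' j j := by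
      intro j; rw [hdiagsq j]
      exact Finset.sum_nonneg fun k _ => sq_nonneg _
    have hd1 : ∀ j, P' j j ≤ 1 := by
      intro j
      have h2 : (P' j j)^2 ≤ ∑ k, (P' j k)^2 :=
        Finset.single_le_sum (f := fun k => (P' j k)^2) (fun k _ => sq_nonneg _)
          (Finset.mem_univ j)
      have h3 := hdiagsq j
      nlinarith [hd0 j]
    have hsumd : ∑ j, P' j j = (m : ℝ) := by
      rw [← hP'tr]; rfl
    refine ⟨?_, hd0, hd1, hsumd, ?_⟩
    · -- dF formula
      have hsq : ∑ i, ∑ j, (P i j)^2 = (m : ℝ) := by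
        have : ∀ i : Fin n, ∑ j, (P i j)^2 = (P * P) i i := by
          intro i
          rw [Matrix.mul_apply]
          refine Finset.sum_congr rfl fun j _ => ?_
          have h' : P j i = P i j := by
            conv_lhs => rw [← hPs]
            rw [Matrix.transpose_apply]
          rw [h', sq]
        rw [Finset.sum_congr rfl fun i _ => this i]
        calc ∑ i, (P * P) i i = (P * P).trace := rfl
        _ = P.trace := by rw [hPP]
        _ = (m : ℝ) := hPt
      have hcross : ∑ i, ∑ j, P i j * μ i j = ∑ j, lam j * P' j j := by
        have h1 : ∀ i : Fin n, ∑ j, P i j * μ i j = (P * μ) i i := by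
          intro i
          rw [Matrix.mul_apply]
          refine Finset.sum_congr rfl fun j _ => ?_
          have h' : μ j i = μ i j := by
            conv_lhs => rw [← hsym]
            rw [Matrix.transpose_apply]
          rw [h']
        rw [Finset.sum_congr rfl fun i _ => h1 i]
        have h2 : ∑ i, (P * μ) i i = (P * μ).trace := rfl
        rw [h2, hmu]
        have h3 : P * (Qᵀ * diagonal lam * Q) = (P * Qᵀ * diagonal lam) * Q := by
          noncomm_ring
        rw [h3, Matrix.trace_mul_comm (P * Qᵀ * diagonal lam) Q]
        have h4 : Q * (P * Qᵀ * diagonal lam) = P' * diagonal lam := by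
          rw [hP']; noncomm_ring
        rw [h4, Matrix.trace]
        refine Finset.sum_congr rfl fun j _ => ?_
        rw [Matrix.diag_apply, Matrix.mul_diagonal]
        ring
      rw [hdF]
      calc ∑ i, ∑ j, (P i j - μ i j)^2
          = ∑ i, ((∑ j, (P i j)^2) - 2*(∑ j, P i j * μ i j) + (∑ j, (μ i j)^2)) := by
            refine Finset.sum_congr rfl fun i _ => ?_
            rw [Finset.mul_sum, ← Finset.sum_sub_distrib, ← Finset.sum_add_distrib]
            exact Finset.sum_congr rfl fun j _ => by ring
        _ = (∑ i, ∑ j, (P i j)^2) - 2*(∑ i, ∑ j, P i j * μ i j) + (∑ i, ∑ j, (μ i j)^2) := by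
            rw [Finset.mul_sum, ← Finset.sum_sub_distrib, ← Finset.sum_add_distrib]
        _ = (m:ℝ) - 2 * (∑ j, lam j * P' j j) + ∑ i, ∑ j, (μ i j)^2 := by
            rw [hsq, hcross]
    · -- uniqueness: if the conjugated diagonal matches dv, then P = P₀
      intro hdg
      have hP'D : P' = D := by
        ext j k
        by_cases hk : k = j
        · subst hk
          rw [hdg k, hD, Matrix.diagonal_apply_eq]
        · have hDjk : D j k = 0 := by
            rw [hD, Matrix.diagonal_apply_ne dv (fun h => hk h.symm)]
          rw [hDjk]
          have hfj : (P' j j)^2 = dv j := by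
            rw [hdg j]
            simp only [hdv]; split <;> norm_num
          have hsplit := Finset.add_sum_erase Finset.univ (fun k => (P' j k)^2)
            (Finset.mem_univ j)
          have hz : ∑ k' ∈ Finset.univ.erase j, (P' j k')^2 = 0 := by
            have h5 := hdiagsq j
            rw [hdg j] at h5
            rw [← hsplit] at h5
            rw [hfj] at h5
            linarith
          have := (Finset.sum_eq_zero_iff_of_nonneg
            (fun k' _ => sq_nonneg (P' j k'))).mp hz k
            (Finset.mem_erase.mpr ⟨hk, Finset.mem_univ k⟩)
          exact pow_eq_zero_iff (by norm_num) |>.mp this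
      have hback : Qᵀ * P' * Q = P := by
        rw [hP']
        calc Qᵀ * (Q * P * Qᵀ) * Q = (Qᵀ * Q) * P * (Qᵀ * Q) := by noncomm_ring
        _ = P := by rw [hQtQ, Matrix.one_mul, Matrix.mul_one]
      rw [← hback, hP'D, ← hP₀D]
  -- the value for P₀
  have hval₀ : ∑ j, lam j * (Q * P₀ * Qᵀ) j j
      = ∑ j ∈ Finset.univ.filter fun j : Fin n => (j:ℕ) < m, lam j := by
    rw [hP₀conj, Finset.sum_filter]
    refine Finset.sum_congr rfl fun j _ => ?_
    rw [hD, Matrix.diagonal_apply_eq]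
    simp only [hdv]
    split <;> ring
  have hmem : ∀ P ∈ Pset, P.IsSymm ∧ P * P = P ∧ P.trace = (m:ℝ) := by
    intro P hP; rw [hPset] at hP; exact hP
  refine ⟨hP₀mem, ?_, ?_⟩
  · intro P hP
    obtain ⟨h1, h2, h3⟩ := hmem P hP
    obtain ⟨hf, hd0, hd1, hsumd, _⟩ := main P h1 h2 h3
    obtain ⟨hf0, _, _, _, _⟩ := main P₀ hP₀symm hP₀idem hP₀tr
    have hk := (key_ineq hmn lam (fun j => (Q * P * Qᵀ) j j) hanti hgap hd0 hd1 hsumd).1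
    rw [hf, hf0, hval₀]
    linarith
  · intro P hP heq
    obtain ⟨h1, h2, h3⟩ := hmem P hP
    obtain ⟨hf, hd0, hd1, hsumd, huniq⟩ := main P h1 h2 h3
    obtain ⟨hf0, _, _, _, _⟩ := main P₀ hP₀symm hP₀idem hP₀tr
    rw [hf, hf0, hval₀] at heq
    have hkey : ∑ j, lam j * (Q * P * Qᵀ) j j
        = ∑ j ∈ Finset.univ.filter fun j : Fin n => (j:ℕ) < m, lam j := by
      linarith
    have := (key_ineq hmn lam (fun j => (Q * P * Qᵀ) j j) hanti hgap hd0 hd1 hsumd).2 hkey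
    exact huniq this
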